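/- Every continuous group homomorphism from SL₂(ℝ) into a compact Hausdorff topological group is trivial; that is, SL₂(ℝ) is minimally almost periodic. In particular, the von Neumann kernel n(SL₂(ℝ)) is all of SL₂(ℝ). -/

import Mathlib

open Set Topology

universe u

noncomputable section SL2Aux

namespace SL2Aux

abbrev G := Matrix.SpecialLinearGroup (Fin 2) ℝ

instance : TopologicalSpace G :=
  inferInstanceAs (TopologicalSpace {A : Matrix (Fin 2) (Fin 2) ℝ // A.det = 1})

def U (t : ℝ) : G := ⟨!![1, t; 0, 1], by simp [Matrix.det_fin_two_of]⟩
def L (t : ℝ) : G := ⟨!![1, 0; t, 1], by simp [Matrix.det_fin_two_of]⟩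
def D (l : ℝ) (h : l ≠ 0) : G :=
  ⟨!![l, 0; 0, l⁻¹], by simp [Matrix.det_fin_two_of, mul_inv_cancel₀ h]⟩

lemma U_zero : U 0 = 1 := by
  apply Subtype.ext
  simp [U, Matrix.SpecialLinearGroup.coe_one, ← Matrix.one_fin_two]

lemma L_zero : L 0 = 1 := by
  apply Subtype.ext
  simp [L, Matrix.SpecialLinearGroup.coe_one, ← Matrix.one_fin_two]

lemma DU (l t : ℝ) (h : l ≠ 0) : D l h * U t = U (l ^ 2 * t) * D l h := by
  apply Subtype.ext
  simp only [Matrix.SpecialLinearGroup.coe_mul]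
  simp only [Matrix.SpecialLinearGroup.coe_mul, D, U, Matrix.mul_fin_two]
  ext i j
  fin_cases i <;> fin_cases j <;> simp <;> field_simp <;> ring

lemma DL (l t : ℝ) (h : l ≠ 0) : D l h * L t = L (t / l ^ 2) * D l h := by
  apply Subtype.ext
  simp only [Matrix.SpecialLinearGroup.coe_mul]
  simp only [Matrix.SpecialLinearGroup.coe_mul, D, L, Matrix.mul_fin_two]
  ext i j
  fin_cases i <;> fin_cases j <;> simp <;> field_simp <;> ring

lemma DU_conj (l t : ℝ) (h : l ≠ 0) : U (l ^ 2 * t) = D l h * U t * (D l h)⁻¹ := by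
  rw [DU l t h]; group

lemma DL_conj (l t : ℝ) (h : l ≠ 0) : L (t / l ^ 2) = D l h * L t * (D l h)⁻¹ := by
  rw [DL l t h]; group

lemma continuous_U : Continuous U := by
  apply Continuous.subtype_mk
  apply continuous_pi; intro i; apply continuous_pi; intro j
  fin_cases i <;> fin_cases j <;>
    simp [U, Matrix.cons_val_zero, Matrix.cons_val_one] <;>
    first | exact continuous_const | exact continuous_id

lemma continuous_L : Continuous L := by
  apply Continuous.subtype_mk
  apply continuous_pi; intro i; apply continuous_pi; intro j
  fin_cases i <;> fin_cases j <;>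
    simp [L, Matrix.cons_val_zero, Matrix.cons_val_one] <;>
    first | exact continuous_const | exact continuous_id

variable {K : Type*} [Group K] [TopologicalSpace K] [IsTopologicalGroup K]
  [CompactSpace K] [T2Space K] (f : G →* K)

lemma conj_one {a : K} (h : (1 : K) ∈ Set.range fun k : K => k * a * k⁻¹) : a = 1 := by
  obtain ⟨k, hk⟩ := h
  have hk' : k * a * k⁻¹ = 1 := hk
  have : a = k⁻¹ * (k * a * k⁻¹) * k := by group
  rw [hk'] at this; simpa using this

lemma f_U_eq_one (hf : Continuous f) (t : ℝ) : f (U t) = 1 := by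
  set a := f (U t) with ha
  have hC : IsClosed (Set.range fun k : K => k * a * k⁻¹) :=
    (isCompact_range ((continuous_id.mul continuous_const).mul
      continuous_inv)).isClosed
  apply conj_one
  have hseq : ∀ n : ℕ, f (U ((1 / ((n : ℝ) + 1)) ^ 2 * t)) ∈
      Set.range fun k : K => k * a * k⁻¹ := by
    intro n
    have hne : (1 / ((n : ℝ) + 1)) ≠ 0 := by positivity
    rw [DU_conj _ t hne]
    exact ⟨f (D _ hne), by simp [ha]⟩
  have htend : Filter.Tendsto (fun n : ℕ => f (U ((1 / ((n : ℝ) + 1)) ^ 2 * t)))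
      Filter.atTop (𝓝 1) := by
    have h0 : Filter.Tendsto (fun n : ℕ => (1 / ((n : ℝ) + 1)) ^ 2 * t)
        Filter.atTop (𝓝 0) := by
      have := (tendsto_one_div_add_atTop_nhds_zero_nat.pow 2).mul_const t
      simpa using this
    have := ((hf.comp continuous_U).tendsto 0).comp h0
    simpa [U_zero, Function.comp_def] using this
  exact hC.mem_of_tendsto htend (Filter.Eventually.of_forall hseq)

lemma f_L_eq_one (hf : Continuous f) (t : ℝ) : f (L t) = 1 := by
  set a := f (L t) with ha
  have hC : IsClosed (Set.range fun k : K => k * a * k⁻¹) :=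
    (isCompact_range ((continuous_id.mul continuous_const).mul
      continuous_inv)).isClosed
  apply conj_one
  have hseq : ∀ n : ℕ, f (L (t / ((n : ℝ) + 1) ^ 2)) ∈
      Set.range fun k : K => k * a * k⁻¹ := by
    intro n
    have hne : ((n : ℝ) + 1) ≠ 0 := by positivity
    rw [DL_conj _ t hne]
    exact ⟨f (D _ hne), by simp [ha]⟩
  have htend : Filter.Tendsto (fun n : ℕ => f (L (t / ((n : ℝ) + 1) ^ 2)))
      Filter.atTop (𝓝 1) := by
    have h0 : Filter.Tendsto (fun n : ℕ => t / ((n : ℝ) + 1) ^ 2)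
        Filter.atTop (𝓝 0) := by
      have := (tendsto_one_div_add_atTop_nhds_zero_nat.pow 2).const_mul t
      simpa [div_eq_mul_inv, one_div, inv_pow] using this
    have := ((hf.comp continuous_L).tendsto 0).comp h0
    simpa [L_zero, Function.comp_def] using this
  exact hC.mem_of_tendsto htend (Filter.Eventually.of_forall hseq)

lemma decomp (g : G) (hc : (g : Matrix (Fin 2) (Fin 2) ℝ) 1 0 ≠ 0) :
    g = U (((g : Matrix (Fin 2) (Fin 2) ℝ) 0 0 - 1) / (g : Matrix (Fin 2) (Fin 2) ℝ) 1 0) *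
        L ((g : Matrix (Fin 2) (Fin 2) ℝ) 1 0) *
        U (((g : Matrix (Fin 2) (Fin 2) ℝ) 1 1 - 1) / (g : Matrix (Fin 2) (Fin 2) ℝ) 1 0) := by
  have hdet : (g : Matrix (Fin 2) (Fin 2) ℝ) 0 0 * (g : Matrix (Fin 2) (Fin 2) ℝ) 1 1 -
      (g : Matrix (Fin 2) (Fin 2) ℝ) 0 1 * (g : Matrix (Fin 2) (Fin 2) ℝ) 1 0 = 1 := by
    rw [← Matrix.det_fin_two]
    exact g.2
  apply Subtype.ext
  set a := (g : Matrix (Fin 2) (Fin 2) ℝ) 0 0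
  set b := (g : Matrix (Fin 2) (Fin 2) ℝ) 0 1
  set c := (g : Matrix (Fin 2) (Fin 2) ℝ) 1 0
  set d := (g : Matrix (Fin 2) (Fin 2) ℝ) 1 1
  have : (g : Matrix (Fin 2) (Fin 2) ℝ) = !![a, b; c, d] := Matrix.eta_fin_two _
  rw [this]
  simp only [Matrix.SpecialLinearGroup.coe_mul]
  simp only [Matrix.SpecialLinearGroup.coe_mul, U, L, Matrix.mul_fin_two]
  ext i j
  fin_cases i <;> fin_cases j <;> simp <;> field_simp <;> nlinarith [hdet]

lemma f_eq_one (hf : Continuous f) (g : G) : f g = 1 := by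
  have key : ∀ h : G, (h : Matrix (Fin 2) (Fin 2) ℝ) 1 0 ≠ 0 → f h = 1 := by
    intro h hc
    rw [decomp h hc]
    simp [f_U_eq_one f hf, f_L_eq_one f hf]
  by_cases hc : (g : Matrix (Fin 2) (Fin 2) ℝ) 1 0 ≠ 0
  · exact key g hc
  · push_neg at hc
    have hdet : (g : Matrix (Fin 2) (Fin 2) ℝ) 0 0 * (g : Matrix (Fin 2) (Fin 2) ℝ) 1 1 -
        (g : Matrix (Fin 2) (Fin 2) ℝ) 0 1 * (g : Matrix (Fin 2) (Fin 2) ℝ) 1 0 = 1 := by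
      rw [← Matrix.det_fin_two]; exact g.2
    have hd : (g : Matrix (Fin 2) (Fin 2) ℝ) 1 1 ≠ 0 := by
      intro h0; rw [hc, h0] at hdet; simp at hdet
    have hc' : ((g * L 1 : G) : Matrix (Fin 2) (Fin 2) ℝ) 1 0 ≠ 0 := by
      rw [Matrix.SpecialLinearGroup.coe_mul]
      have : ((g : Matrix (Fin 2) (Fin 2) ℝ) * (L 1 : Matrix (Fin 2) (Fin 2) ℝ)) 1 0 =
          (g : Matrix (Fin 2) (Fin 2) ℝ) 1 0 * 1 + (g : Matrix (Fin 2) (Fin 2) ℝ) 1 1 * 1 := by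
        rw [Matrix.mul_apply, Fin.sum_univ_two]
        simp [L]
      rw [this, hc]
      simpa using hd
    have h1 := key (g * L 1) hc'
    have h2 : f (g * L 1) = f g * f (L 1) := map_mul f g (L 1)
    rw [f_L_eq_one f hf, mul_one] at h2
    rw [← h2, h1]

end SL2Aux

end SL2Aux

/-- The Bohr-closure of a subset `S` of a topological group `G`: the set of `g ∈ G` such that
`f g ∈ cl(f(S))` for every continuous homomorphism `f` from `G` into a compact Hausdorff
topological group. -/
def bohrClosure (G : Type u) [Group G] [TopologicalSpace G] (S : Set G) : Set G :=
  {g : G | ∀ (K : Type u) [Group K] [TopologicalSpace K] [IsTopologicalGroup K]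
    [CompactSpace K] [T2Space K] (f : G →* K), Continuous f → f g ∈ closure (f '' S)}

/-- The von Neumann kernel `n(G)` of a topological group `G`. -/
def vonNeumannKernel (G : Type u) [Group G] [TopologicalSpace G] : Set G :=
  bohrClosure G {1}

/-- A topological group `G` is `c_b`-compact if for every topological group `Y` and every
subgroup `S` of `G × Y`, the projection `π_Y` preserves the Bohr-closure. -/
def IsCbCompact (G : Type u) [Group G] [TopologicalSpace G] [IsTopologicalGroup G] : Prop :=
  ∀ (Y : Type u) [Group Y] [TopologicalSpace Y] [IsTopologicalGroup Y] (S : Subgroup (G × Y)),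
    Prod.snd '' bohrClosure (G × Y) (S : Set (G × Y)) =
      bohrClosure Y (Prod.snd '' (S : Set (G × Y)))

/-- `SL₂(ℝ)`, topologized as a subspace of the `2 × 2` real matrices. -/
instance : TopologicalSpace (Matrix.SpecialLinearGroup (Fin 2) ℝ) :=
  inferInstanceAs (TopologicalSpace {A : Matrix (Fin 2) (Fin 2) ℝ // A.det = 1})

/-- `SL₂(ℝ)` is minimally almost periodic: every continuous homomorphism into a compact
Hausdorff topological group is trivial; in particular `n(SL₂(ℝ)) = SL₂(ℝ)`. -/
theorem SL2R_minimally_almost_periodic :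
    (∀ (K : Type) [Group K] [TopologicalSpace K] [IsTopologicalGroup K]
        [CompactSpace K] [T2Space K] (f : Matrix.SpecialLinearGroup (Fin 2) ℝ →* K),
        Continuous f → ∀ g, f g = 1) ∧
      vonNeumannKernel (Matrix.SpecialLinearGroup (Fin 2) ℝ) = Set.univ := by
  have main : ∀ (K : Type) [Group K] [TopologicalSpace K] [IsTopologicalGroup K]
      [CompactSpace K] [T2Space K] (f : Matrix.SpecialLinearGroup (Fin 2) ℝ →* K),
      Continuous f → ∀ g, f g = 1 := by
    intro K _ _ _ _ _ f hf g
    exact SL2Aux.f_eq_one f hf g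
  refine ⟨main, ?_⟩
  ext g
  simp only [vonNeumannKernel, bohrClosure, Set.mem_setOf_eq, Set.mem_univ, iff_true]
  intro K _ _ _ _ _ f hf
  rw [main K f hf g]
  exact subset_closure ⟨1, rfl, map_one f⟩
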